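/- Let N ∈ ℕ, α > 0, γ ≥ 1, s ∈ ℝ, h > 0, and let M, K, W be real symmetric N×N matrices with M positive definite, K positive semidefinite, W positive definite, satisfying xᵀ M x ≤ xᵀ W x ≤ γ xᵀ M x and xᵀ M x ≤ c₂ h^s ‖x‖² for all x ∈ ℝ^N (with constant c₂ > 0). Set G = M + α K M⁻¹ K and define the block-diagonal matrix S_h = (1/α)·Diag(M G⁻¹ M + W − M, 0, γ M W⁻¹ M) acting on ℝ^{3N}. Then S_h is symmetric positive semidefinite and its largest eigenvalue satisfies λ_max(S_h) ≤ (γ c₂/α) h^s. -/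

import Mathlib

open Matrix

section Aux

variable {m n : Type*} [Fintype m] [Fintype n]

lemma psd_qf {A : Matrix n n ℝ} (hA : A.PosSemidef) (x : n → ℝ) :
    0 ≤ x ⬝ᵥ (A *ᵥ x) := by simpa using hA.dotProduct_mulVec_nonneg x

lemma psd_smul {A : Matrix n n ℝ} (hA : A.PosSemidef) {c : ℝ} (hc : 0 ≤ c) :
    (c • A).PosSemidef := by
  refine Matrix.PosSemidef.of_dotProduct_mulVec_nonneg ?_ (fun x => ?_)
  · rw [Matrix.IsHermitian, conjTranspose_smul, hA.1.eq, star_trivial]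
  · rw [smul_mulVec, dotProduct_smul, smul_eq_mul]
    exact mul_nonneg hc (hA.dotProduct_mulVec_nonneg x)

lemma dot_symm {A : Matrix n n ℝ} (hA : Aᵀ = A) (x y : n → ℝ) :
    x ⬝ᵥ (A *ᵥ y) = y ⬝ᵥ (A *ᵥ x) := by
  rw [Matrix.dotProduct_mulVec, ← Matrix.mulVec_transpose, hA, dotProduct_comm]

lemma key_ineq [DecidableEq n] {A B : Matrix n n ℝ} (hA : A.PosSemidef) (hB : B.PosDef)
    (hAB : ∀ x, x ⬝ᵥ (A *ᵥ x) ≤ x ⬝ᵥ (B *ᵥ x)) (x : n → ℝ) :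
    x ⬝ᵥ ((A * B⁻¹ * A) *ᵥ x) ≤ x ⬝ᵥ (A *ᵥ x) := by
  have hAs : Aᵀ = A := hA.1.eq
  set y := B⁻¹ *ᵥ (A *ᵥ x) with hy
  have hBy : B *ᵥ y = A *ᵥ x := by
    rw [hy, mulVec_mulVec, Matrix.mul_nonsing_inv _ (isUnit_iff_ne_zero.mpr hB.det_pos.ne'), one_mulVec]
  have hlhs : (A * B⁻¹ * A) *ᵥ x = A *ᵥ y := by
    rw [mul_assoc, ← mulVec_mulVec, ← mulVec_mulVec]
  have hxy : x ⬝ᵥ (A *ᵥ y) = y ⬝ᵥ (A *ᵥ x) := dot_symm hAs x y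
  have e2 : y ⬝ᵥ (A *ᵥ x) = y ⬝ᵥ (B *ᵥ y) := by rw [hBy]
  have h2 : 0 ≤ (x - y) ⬝ᵥ (A *ᵥ (x - y)) := psd_qf hA _
  have e1 : (x - y) ⬝ᵥ (A *ᵥ (x - y))
      = x ⬝ᵥ (A *ᵥ x) - x ⬝ᵥ (A *ᵥ y) - y ⬝ᵥ (A *ᵥ x) + y ⬝ᵥ (A *ᵥ y) := by
    rw [Matrix.mulVec_sub, sub_dotProduct, dotProduct_sub,
      dotProduct_sub]
    ring
  have h3 : y ⬝ᵥ (A *ᵥ y) ≤ y ⬝ᵥ (B *ᵥ y) := hAB y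
  rw [hlhs, hxy, e2]
  linarith [h2, e1.symm.le, e1.le]

lemma qf_diagBlocks (P : Matrix m m ℝ) (R : Matrix n n ℝ) (x : m ⊕ n → ℝ) :
    x ⬝ᵥ ((fromBlocks P 0 0 R) *ᵥ x)
      = (x ∘ Sum.inl) ⬝ᵥ (P *ᵥ (x ∘ Sum.inl)) + (x ∘ Sum.inr) ⬝ᵥ (R *ᵥ (x ∘ Sum.inr)) := by
  have hx : x = Sum.elim (x ∘ Sum.inl) (x ∘ Sum.inr) := (Sum.elim_comp_inl_inr x).symm
  rw [fromBlocks_mulVec]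
  conv_lhs => rw [hx]
  rw [sumElim_dotProduct_sumElim]
  simp

lemma dot_split (x : m ⊕ n → ℝ) :
    x ⬝ᵥ x = (x ∘ Sum.inl) ⬝ᵥ (x ∘ Sum.inl) + (x ∘ Sum.inr) ⬝ᵥ (x ∘ Sum.inr) := by
  have hx : x = Sum.elim (x ∘ Sum.inl) (x ∘ Sum.inr) := (Sum.elim_comp_inl_inr x).symm
  conv_lhs => rw [hx]
  rw [sumElim_dotProduct_sumElim]

lemma psd_fromBlocks_diag {P : Matrix m m ℝ} {R : Matrix n n ℝ}
    (hP : P.PosSemidef) (hR : R.PosSemidef) : (fromBlocks P 0 0 R).PosSemidef := by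
  refine Matrix.PosSemidef.of_dotProduct_mulVec_nonneg (Matrix.IsHermitian.fromBlocks hP.1 (by simp) hR.1) (fun x => ?_)
  rw [star_trivial, qf_diagBlocks]
  exact add_nonneg (psd_qf hP _) (psd_qf hR _)

end Aux

/-- The convergence-factor matrix `S_h = (1/α)·Diag(M G⁻¹ M + W − M, 0, γ M W⁻¹ M)` of the
discretized sGS-mABCD complexity bound is symmetric positive semidefinite and its largest
eigenvalue is at most `(γ c₂ / α) hˢ`. -/
theorem eigenvalue_bound_Sh
    (N : ℕ) (α γ s h : ℝ) (hα : 0 < α) (hγ : 1 ≤ γ) (hh : 0 < h)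
    (M K W : Matrix (Fin N) (Fin N) ℝ)
    (hMpd : M.PosDef) (hKpsd : K.PosSemidef) (hWpd : W.PosDef)
    (hMW : ∀ x : Fin N → ℝ, x ⬝ᵥ (M *ᵥ x) ≤ x ⬝ᵥ (W *ᵥ x))
    (hWM : ∀ x : Fin N → ℝ, x ⬝ᵥ (W *ᵥ x) ≤ γ * (x ⬝ᵥ (M *ᵥ x)))
    (c₂ : ℝ) (hc₂ : 0 < c₂)
    (hMup : ∀ x : Fin N → ℝ, x ⬝ᵥ (M *ᵥ x) ≤ c₂ * h ^ s * (x ⬝ᵥ x))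
    (Sh : Matrix (Fin N ⊕ (Fin N ⊕ Fin N)) (Fin N ⊕ (Fin N ⊕ Fin N)) ℝ)
    (hSh : Sh = Matrix.fromBlocks
      ((1 / α) • (M * (M + α • (K * M⁻¹ * K))⁻¹ * M + W - M)) 0 0
      (Matrix.fromBlocks 0 0 0 ((γ / α) • (M * W⁻¹ * M)))) :
    Sh.PosSemidef ∧
      ∀ (μ : ℝ) (x : Fin N ⊕ (Fin N ⊕ Fin N) → ℝ), x ≠ 0 →
        Sh *ᵥ x = μ • x → μ ≤ (γ * c₂ / α) * h ^ s := by
  have hγ0 : (0:ℝ) ≤ γ := by linarith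
  have hα1 : (0:ℝ) ≤ 1 / α := by positivity
  have hγα : (0:ℝ) ≤ γ / α := div_nonneg hγ0 hα.le
  have hKM : (K * M⁻¹ * K).PosSemidef := by
    have := (hMpd.posSemidef.inv).conjTranspose_mul_mul_same K
    rwa [hKpsd.1.eq] at this
  have hGpd : (M + α • (K * M⁻¹ * K)).PosDef :=
    hMpd.add_posSemidef (psd_smul hKM hα.le)
  have hMG : ∀ x : Fin N → ℝ, x ⬝ᵥ (M *ᵥ x) ≤ x ⬝ᵥ ((M + α • (K * M⁻¹ * K)) *ᵥ x) := by
    intro x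
    rw [Matrix.add_mulVec, dotProduct_add]
    exact le_add_of_nonneg_right (psd_qf (psd_smul hKM hα.le) x)
  have hkey1 : ∀ x : Fin N → ℝ,
      x ⬝ᵥ ((M * (M + α • (K * M⁻¹ * K))⁻¹ * M) *ᵥ x) ≤ x ⬝ᵥ (M *ᵥ x) :=
    key_ineq hMpd.posSemidef hGpd hMG
  have hkey2 : ∀ x : Fin N → ℝ,
      x ⬝ᵥ ((M * W⁻¹ * M) *ᵥ x) ≤ x ⬝ᵥ (M *ᵥ x) :=
    key_ineq hMpd.posSemidef hWpd hMW
  have hMGM : (M * (M + α • (K * M⁻¹ * K))⁻¹ * M).PosSemidef := by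
    have := (hGpd.posSemidef.inv).mul_mul_conjTranspose_same M
    rwa [hMpd.1.eq] at this
  have hMWM : (M * W⁻¹ * M).PosSemidef := by
    have := (hWpd.posSemidef.inv).mul_mul_conjTranspose_same M
    rwa [hMpd.1.eq] at this
  have hWsubM : (W - M).PosSemidef := by
    refine Matrix.PosSemidef.of_dotProduct_mulVec_nonneg ?_ (fun x => ?_)
    · rw [Matrix.IsHermitian, conjTranspose_sub, hWpd.1.eq, hMpd.1.eq]
    · rw [star_trivial, Matrix.sub_mulVec, dotProduct_sub, sub_nonneg]
      exact hMW x
  have hP1 : (M * (M + α • (K * M⁻¹ * K))⁻¹ * M + W - M).PosSemidef := by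
    have := hMGM.add hWsubM
    rwa [← add_sub_assoc] at this
  constructor
  · rw [hSh]
    exact psd_fromBlocks_diag (psd_smul hP1 hα1)
      (psd_fromBlocks_diag Matrix.PosSemidef.zero (psd_smul hMWM hγα))
  · intro μ x hx hEig
    have hqf : x ⬝ᵥ (Sh *ᵥ x)
        = (1/α) * ((x ∘ Sum.inl) ⬝ᵥ ((M * (M + α • (K * M⁻¹ * K))⁻¹ * M + W - M)
            *ᵥ (x ∘ Sum.inl)))
          + (γ/α) * (((x ∘ Sum.inr) ∘ Sum.inr) ⬝ᵥ ((M * W⁻¹ * M)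
            *ᵥ ((x ∘ Sum.inr) ∘ Sum.inr))) := by
      rw [hSh, qf_diagBlocks, qf_diagBlocks]
      simp [smul_mulVec, dotProduct_smul]
    set u := x ∘ Sum.inl with hu
    set v := (x ∘ Sum.inr) ∘ Sum.inl with hv
    set w := (x ∘ Sum.inr) ∘ Sum.inr with hw
    have b1 : u ⬝ᵥ ((M * (M + α • (K * M⁻¹ * K))⁻¹ * M + W - M) *ᵥ u)
        ≤ γ * (c₂ * h ^ s * (u ⬝ᵥ u)) := by
      have e : (M * (M + α • (K * M⁻¹ * K))⁻¹ * M + W - M) *ᵥ u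
          = (M * (M + α • (K * M⁻¹ * K))⁻¹ * M) *ᵥ u + W *ᵥ u - M *ᵥ u := by
        rw [Matrix.sub_mulVec, Matrix.add_mulVec]
      rw [e, dotProduct_sub, dotProduct_add]
      have h1 := hkey1 u
      have h2 := hWM u
      have h3 := mul_le_mul_of_nonneg_left (hMup u) hγ0
      linarith
    have b3 : w ⬝ᵥ ((M * W⁻¹ * M) *ᵥ w) ≤ c₂ * h ^ s * (w ⬝ᵥ w) :=
      (hkey2 w).trans (hMup w)
    have ht1 : (0:ℝ) ≤ u ⬝ᵥ u := Finset.sum_nonneg fun i _ => mul_self_nonneg _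
    have ht2 : (0:ℝ) ≤ v ⬝ᵥ v := Finset.sum_nonneg fun i _ => mul_self_nonneg _
    have ht3 : (0:ℝ) ≤ w ⬝ᵥ w := Finset.sum_nonneg fun i _ => mul_self_nonneg _
    have hxx0 : (0:ℝ) ≤ x ⬝ᵥ x := Finset.sum_nonneg fun i _ => mul_self_nonneg _
    have hxxne : x ⬝ᵥ x ≠ 0 := fun hc => hx (dotProduct_self_eq_zero.mp hc)
    have hxx : (0:ℝ) < x ⬝ᵥ x := lt_of_le_of_ne hxx0 (Ne.symm hxxne)
    have hxsplit : x ⬝ᵥ x = u ⬝ᵥ u + (v ⬝ᵥ v + w ⬝ᵥ w) := by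
      rw [dot_split x, dot_split (x ∘ Sum.inr)]
    have hC : (0:ℝ) ≤ γ * c₂ / α * h ^ s := by
      have : (0:ℝ) < h ^ s := Real.rpow_pos_of_pos hh s
      positivity
    have hCt2 : (0:ℝ) ≤ (γ * c₂ / α * h ^ s) * (v ⬝ᵥ v) := mul_nonneg hC ht2
    have htot : x ⬝ᵥ (Sh *ᵥ x) ≤ (γ * c₂ / α * h ^ s) * (x ⬝ᵥ x) := by
      rw [hqf, hxsplit]
      have m1 := mul_le_mul_of_nonneg_left b1 hα1
      have m3 := mul_le_mul_of_nonneg_left b3 hγα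
      have e1 : (1/α) * (γ * (c₂ * h ^ s * (u ⬝ᵥ u)))
          = (γ * c₂ / α * h ^ s) * (u ⬝ᵥ u) := by ring
      have e3 : (γ/α) * (c₂ * h ^ s * (w ⬝ᵥ w))
          = (γ * c₂ / α * h ^ s) * (w ⬝ᵥ w) := by ring
      have e4 : (γ * c₂ / α * h ^ s) * (u ⬝ᵥ u + (v ⬝ᵥ v + w ⬝ᵥ w))
          = (γ * c₂ / α * h ^ s) * (u ⬝ᵥ u) + (γ * c₂ / α * h ^ s) * (v ⬝ᵥ v)
            + (γ * c₂ / α * h ^ s) * (w ⬝ᵥ w) := by ring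
      linarith
    have hEq : μ * (x ⬝ᵥ x) = x ⬝ᵥ (Sh *ᵥ x) := by
      rw [hEig, dotProduct_smul, smul_eq_mul]
    have : μ * (x ⬝ᵥ x) ≤ (γ * c₂ / α * h ^ s) * (x ⬝ᵥ x) := hEq ▸ htot
    exact le_of_mul_le_mul_right (by linarith) hxx
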